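/- Let r ≥ 1 be an integer and G a finite simple graph. If A₀ ⊆ V(G) percolates with respect to the r-neighbour bootstrap process in G, then |A₀| ≥ |V(G)| + ⌈(e(A₀) − |E(G)|)/r⌉, where the ceiling is of the rational number (e(A₀) − |E(G)|)/r. -/

import Mathlib

namespace BP

/-- The `r`-neighbour bootstrap closure of `A₀` in `G`: the smallest set `S` containing `A₀`
such that every vertex with at least `r` neighbours in `S` belongs to `S`. -/
def closure {V : Type*} (G : SimpleGraph V) (r : ℕ) (A₀ : Set V) : Set V :=
  ⋂₀ {S : Set V | A₀ ⊆ S ∧ ∀ v : V, r ≤ (G.neighborSet v ∩ S).ncard → v ∈ S}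

/-- `A₀` percolates under the `r`-neighbour bootstrap process in `G`. -/
def Percolates {V : Type*} (G : SimpleGraph V) (r : ℕ) (A₀ : Set V) : Prop :=
  closure G r A₀ = Set.univ

/-- The minimum cardinality of a set percolating under the `r`-neighbour process in `G`. -/
noncomputable def minPerc {V : Type*} (G : SimpleGraph V) (r : ℕ) : ℕ :=
  sInf {n : ℕ | ∃ A₀ : Set V, Percolates G r A₀ ∧ A₀.ncard = n}

/-- The number of edges of `G` having both endpoints in `A`. -/
noncomputable def eIn {V : Type*} (G : SimpleGraph V) (A : Set V) : ℕ :=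
  {e ∈ G.edgeSet | ∀ v ∈ e, v ∈ A}.ncard

lemma eIn_insert {V : Type*} [Fintype V] (G : SimpleGraph V) (B : Set V) (v : V)
    (hv : v ∉ B) :
    eIn G B + (G.neighborSet v ∩ B).ncard ≤ eIn G (insert v B) := by
  classical
  set E1 : Set (Sym2 V) := {e ∈ G.edgeSet | ∀ u ∈ e, u ∈ B} with hE1
  set E2 : Set (Sym2 V) := (fun w => s(v, w)) '' (G.neighborSet v ∩ B) with hE2
  have hE2card : E2.ncard = (G.neighborSet v ∩ B).ncard := by
    apply Set.ncard_image_of_injOn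
    intro a ha b hb hab
    rcases Sym2.eq_iff.1 hab with ⟨_, h2⟩ | ⟨h1, h2⟩
    · exact h2
    · exfalso
      have hadj : G.Adj v a := ha.1
      rw [h2] at hadj
      exact G.irrefl hadj
  have hdisj : Disjoint E1 E2 := by
    rw [Set.disjoint_left]
    rintro e he1 ⟨w, hw, rfl⟩
    exact hv (he1.2 v (Sym2.mem_mk_left v w))
  have hsub : E1 ∪ E2 ⊆ {e ∈ G.edgeSet | ∀ u ∈ e, u ∈ insert v B} := by
    rintro e (he | ⟨w, hw, rfl⟩)
    · exact ⟨he.1, fun u hu => Set.mem_insert_of_mem _ (he.2 u hu)⟩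
    · refine ⟨hw.1, fun u hu => ?_⟩
      rcases Sym2.mem_iff.1 hu with rfl | rfl
      · exact Set.mem_insert _ _
      · exact Set.mem_insert_of_mem _ hw.2
  calc eIn G B + (G.neighborSet v ∩ B).ncard
      = (E1 ∪ E2).ncard := by
        rw [Set.ncard_union_eq hdisj (Set.toFinite _) (Set.toFinite _), hE2card]; rfl
    _ ≤ eIn G (insert v B) := Set.ncard_le_ncard hsub (Set.toFinite _)

theorem percolating_general_lower_bound {V : Type*} [Fintype V] (G : SimpleGraph V)
    (r : ℕ) (hr : 1 ≤ r) (A₀ : Set V) (h : Percolates G r A₀) :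
    (Fintype.card V : ℤ) + ⌈((eIn G A₀ : ℚ) - (G.edgeSet.ncard : ℚ)) / (r : ℚ)⌉
      ≤ (A₀.ncard : ℤ) := by
  classical
  set M : Set (Set V) :=
    {B | A₀ ⊆ B ∧ eIn G A₀ + r * (B \ A₀).ncard ≤ eIn G B} with hM
  have hA₀M : A₀ ∈ M := by
    refine ⟨le_refl _, ?_⟩
    simp
  obtain ⟨B, hBM, hBmax⟩ :=
    Set.Finite.exists_maximalFor (fun B : Set V => B.ncard) M (Set.toFinite M) ⟨A₀, hA₀M⟩
  -- B is closed under the infection rule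
  have hclosed : ∀ v : V, r ≤ (G.neighborSet v ∩ B).ncard → v ∈ B := by
    intro v hv
    by_contra hvB
    have hins : insert v B ∈ M := by
      refine ⟨hBM.1.trans (Set.subset_insert _ _), ?_⟩
      have h1 : (insert v B \ A₀).ncard = (B \ A₀).ncard + 1 := by
        have : insert v B \ A₀ = insert v (B \ A₀) := by
          ext u
          simp only [Set.mem_diff, Set.mem_insert_iff]
          constructor
          · rintro ⟨(rfl | hu), hu2⟩
            · exact Or.inl rfl
            · exact Or.inr ⟨hu, hu2⟩
          · rintro (rfl | ⟨h1, h2⟩)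
            · exact ⟨Or.inl rfl, fun hc => hvB (hBM.1 hc)⟩
            · exact ⟨Or.inr h1, h2⟩
        rw [this, Set.ncard_insert_of_notMem (fun hc => hvB hc.1) (Set.toFinite _)]
      have h2 := eIn_insert G B v hvB
      have h3 := hBM.2
      calc eIn G A₀ + r * (insert v B \ A₀).ncard
          = (eIn G A₀ + r * (B \ A₀).ncard) + r := by rw [h1]; ring
        _ ≤ eIn G B + (G.neighborSet v ∩ B).ncard := add_le_add h3 hv
        _ ≤ eIn G (insert v B) := h2
    have hle : B.ncard ≤ (insert v B).ncard :=
      Set.ncard_le_ncard (Set.subset_insert _ _) (Set.toFinite _)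
    have : (insert v B).ncard ≤ B.ncard := hBmax hins hle
    rw [Set.ncard_insert_of_notMem hvB (Set.toFinite _)] at this
    omega
  -- closure ⊆ B, hence B = univ
  have hBuniv : B = Set.univ := by
    have hcl : closure G r A₀ ⊆ B := Set.sInter_subset_of_mem ⟨hBM.1, hclosed⟩
    rw [h] at hcl
    exact Set.eq_univ_of_univ_subset hcl
  -- the key numeric inequality
  have hkey : eIn G A₀ + r * (Set.univ \ A₀).ncard ≤ G.edgeSet.ncard := by
    have := hBM.2
    rw [hBuniv] at this
    refine this.trans (Set.ncard_le_ncard ?_ (Set.toFinite _))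
    intro e he; exact he.1
  have hcompl : (Set.univ \ A₀).ncard = Fintype.card V - A₀.ncard := by
    rw [Set.ncard_diff (Set.subset_univ _) (Set.toFinite _), Set.ncard_univ,
      Nat.card_eq_fintype_card]
  have hle : A₀.ncard ≤ Fintype.card V := by
    rw [← Nat.card_eq_fintype_card, ← Set.ncard_univ V]
    exact Set.ncard_le_ncard (Set.subset_univ _) (Set.toFinite _)
  rw [hcompl] at hkey
  -- now finish in ℚ
  have hrQ : (0 : ℚ) < (r : ℚ) := by exact_mod_cast hr
  have h2 := (Nat.cast_le (α := ℚ)).2 hkey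
  push_cast [Nat.cast_sub hle] at h2
  have hceil : ⌈((eIn G A₀ : ℚ) - (G.edgeSet.ncard : ℚ)) / (r : ℚ)⌉
      ≤ (A₀.ncard : ℤ) - (Fintype.card V : ℤ) := by
    rw [Int.ceil_le, div_le_iff₀ hrQ]
    push_cast
    nlinarith [h2]
  omega

end BP
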